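/- Let x, h, H be positive integers with h ≤ H and H = o(x). Then the number of integers q with h < q ≤ H such that {H/q} − h/q < {x/q} ≤ {H/q} is ≪_ε x^ε h, where {y} denotes the fractional part of y. -/

import Mathlib

open Finset Filter Asymptotics

lemma aux0 (δ C : ℝ) (hδ0 : 0 < δ) (hC1 : 1 ≤ C) (hC2 : 1/δ ≤ C) (e : ℕ) :
    (e + 1 : ℝ) ≤ C * (1+δ)^e := by
  have hber : 1 + (e:ℝ) * δ ≤ (1+δ)^e := one_add_mul_le_pow (by linarith) e
  have heδ : 0 ≤ (e:ℝ) * δ := mul_nonneg (Nat.cast_nonneg e) hδ0.le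
  have h2' := mul_le_mul_of_nonneg_right hC2 heδ
  have h3 : (1/δ) * ((e:ℝ)*δ) = e := by field_simp
  have h4 : C * (1 + (e:ℝ)*δ) = C + C * ((e:ℝ)*δ) := by ring
  have h5 : C * (1 + (e:ℝ)*δ) ≤ C * (1+δ)^e :=
    mul_le_mul_of_nonneg_left hber (by linarith)
  linarith

lemma aux_exp (ε : ℝ) (hε : 0 < ε) (e : ℕ) :
    (e + 1 : ℝ) ≤ max 1 (1/((2:ℝ)^ε - 1)) * (2:ℝ)^(ε * e) := by
  have h2 : (1:ℝ) < (2:ℝ)^ε := (Real.one_lt_rpow_iff_of_pos (by norm_num)).2 (Or.inl ⟨by norm_num, hε⟩)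
  have hrw : (2:ℝ)^(ε * e) = (1+((2:ℝ)^ε - 1))^e := by
    rw [Real.rpow_mul (by norm_num), Real.rpow_natCast]
    ring_nf
  rw [hrw]
  exact aux0 _ _ (by linarith) (le_max_left _ _) (le_max_right _ _) e

lemma divisor_bound (ε : ℝ) (hε : 0 < ε) :
    ∃ C : ℝ, 0 < C ∧ ∀ n : ℕ, 0 < n → (n.divisors.card : ℝ) ≤ C * (n:ℝ)^ε := by
  set C0 := max 1 (1/((2:ℝ)^ε - 1)) with hC0
  have hC01 : (1:ℝ) ≤ C0 := le_max_left _ _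
  set P : ℕ := ⌈(2:ℝ)^(1/ε)⌉₊ with hP
  refine ⟨C0 ^ P, by positivity, fun n hn => ?_⟩
  have hcard : (n.divisors.card : ℝ) = ∏ p ∈ n.primeFactors, ((n.factorization p : ℝ) + 1) := by
    rw [Nat.card_divisors hn.ne']
    push_cast
    rfl
  have hnfact : (n:ℝ)^ε = ∏ p ∈ n.primeFactors, ((p:ℝ))^(ε * (n.factorization p)) := by
    conv_lhs => rw [← Nat.factorization_prod_pow_eq_self hn.ne']
    rw [Nat.factorization, Finsupp.prod]
    push_cast
    rw [← Real.finset_prod_rpow _ _ (fun p _ => by positivity)]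
    refine Finset.prod_congr rfl (fun p hp => ?_)
    rw [← Real.rpow_natCast (p:ℝ), ← Real.rpow_mul (Nat.cast_nonneg p), mul_comm]
    simp [apply_ite ((↑·) : ℕ → ℝ)]
  -- pointwise bound
  have key : ∀ p ∈ n.primeFactors,
      ((n.factorization p : ℝ) + 1) ≤ (if p < P then C0 else 1) * (p:ℝ)^(ε * (n.factorization p)) := by
    intro p hp
    have hpp : p.Prime := Nat.prime_of_mem_primeFactors hp
    have hp2 : (2:ℝ) ≤ p := by exact_mod_cast hpp.two_le
    set e := n.factorization p
    by_cases hcase : p < P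
    · simp only [hcase, if_true]
      calc (e:ℝ) + 1 ≤ C0 * (2:ℝ)^(ε * e) := aux_exp ε hε e
        _ ≤ C0 * (p:ℝ)^(ε * e) := by
            apply mul_le_mul_of_nonneg_left _ (by linarith)
            exact Real.rpow_le_rpow (by norm_num) hp2 (by positivity)
    · simp only [hcase, if_false, one_mul]
      -- p ≥ P, so p^ε ≥ 2
      have hpP : ((2:ℝ)^(1/ε)) ≤ p := le_trans (Nat.le_ceil _) (by exact_mod_cast Nat.cast_le.2 (not_lt.1 hcase))
      have h2p : (2:ℝ) ≤ (p:ℝ)^ε := by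
        have := Real.rpow_le_rpow (by positivity) hpP hε.le
        rwa [← Real.rpow_mul (by norm_num), one_div, inv_mul_cancel₀ hε.ne', Real.rpow_one] at this
      calc (e:ℝ) + 1 ≤ (2:ℝ)^e := by exact_mod_cast Nat.succ_le_of_lt (Nat.lt_two_pow_self (n := e))
        _ ≤ ((p:ℝ)^ε)^e := pow_le_pow_left₀ (by norm_num) h2p e
        _ = (p:ℝ)^(ε * e) := by rw [← Real.rpow_natCast ((p:ℝ)^ε) e, ← Real.rpow_mul (Nat.cast_nonneg p)]
  calc (n.divisors.card : ℝ) = ∏ p ∈ n.primeFactors, ((n.factorization p : ℝ) + 1) := hcard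
    _ ≤ ∏ p ∈ n.primeFactors, (if p < P then C0 else 1) * (p:ℝ)^(ε * (n.factorization p)) :=
        Finset.prod_le_prod (fun p _ => by positivity) key
    _ = (∏ p ∈ n.primeFactors, (if p < P then C0 else 1)) * ∏ p ∈ n.primeFactors, (p:ℝ)^(ε * (n.factorization p)) := Finset.prod_mul_distrib
    _ ≤ C0 ^ P * (n:ℝ)^ε := by
        rw [← hnfact]
        apply mul_le_mul_of_nonneg_right _ (by positivity)
        rw [Finset.prod_ite, Finset.prod_const, Finset.prod_const, one_pow, mul_one]
        apply pow_le_pow_right₀ hC01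
        calc _ ≤ (Finset.range P).card := Finset.card_le_card (fun p hp => Finset.mem_range.2 (Finset.mem_filter.1 hp).2)
          _ = P := Finset.card_range P

/-- The number of `h < q ≤ H` with `{H/q} - h/q < {x/q} ≤ {H/q}` is `≪_ε x^ε h`. -/
theorem count_fract_near_H
    (h H x : ℕ → ℕ) (hh : ∀ i, 0 < h i) (hx : ∀ i, 0 < x i)
    (hhH : ∀ i, h i ≤ H i)
    (hHx : (fun i => (H i : ℝ)) =o[atTop] (fun i => (x i : ℝ)))
    (ε : ℝ) (hε : 0 < ε) :
    (fun i =>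
        (((Finset.Ioc (h i) (H i)).filter
            (fun q : ℕ =>
              Int.fract ((H i : ℝ) / (q : ℝ)) - (h i : ℝ) / (q : ℝ)
                  < Int.fract ((x i : ℝ) / (q : ℝ)) ∧
                Int.fract ((x i : ℝ) / (q : ℝ)) ≤ Int.fract ((H i : ℝ) / (q : ℝ)))).card : ℝ))
      =O[atTop] (fun i => (x i : ℝ) ^ ε * (h i : ℝ)) := by
  obtain ⟨C, hC, hdiv⟩ := divisor_bound ε hε
  rw [isBigO_iff]
  refine ⟨C * (2:ℝ)^ε, ?_⟩
  have hev0 := hHx.def (show (0:ℝ) < 1/2 by norm_num)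
  have hev : ∀ᶠ i in atTop, (H i : ℝ) ≤ (1/2 : ℝ) * (x i) := hev0.mono (by
    intro i hi
    simpa [abs_of_nonneg, Nat.cast_nonneg] using hi)
  filter_upwards [hev] with i hi
  have hHlt : H i < x i := by
    have hx1 : (1:ℝ) ≤ (x i : ℝ) := by exact_mod_cast hx i
    have : (H i : ℝ) < (x i : ℝ) := by linarith
    exact_mod_cast this
  set S := (Finset.Ioc (h i) (H i)).filter
            (fun q : ℕ =>
              Int.fract ((H i : ℝ) / (q : ℝ)) - (h i : ℝ) / (q : ℝ)
                  < Int.fract ((x i : ℝ) / (q : ℝ)) ∧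
                Int.fract ((x i : ℝ) / (q : ℝ)) ≤ Int.fract ((H i : ℝ) / (q : ℝ))) with hS
  -- subset of a biUnion of divisor sets
  have hsub : S ⊆ (Finset.range (h i)).biUnion (fun a => (x i + a - H i).divisors) := by
    intro q hq
    rw [hS, Finset.mem_filter, Finset.mem_Ioc] at hq
    obtain ⟨⟨hq1, hq2⟩, hcond1, hcond2⟩ := hq
    have hq0 : 0 < q := lt_of_le_of_lt (Nat.zero_le _) hq1
    have hqR : (0:ℝ) < q := by exact_mod_cast hq0
    rw [Int.fract_div_natCast_eq_div_natCast_mod, Int.fract_div_natCast_eq_div_natCast_mod] at hcond1 hcond2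
    set r := x i % q
    set R := H i % q
    have hrR : r ≤ R := by
      have := (div_le_div_iff_of_pos_right hqR).1 hcond2
      exact_mod_cast this
    have hRrh : R - r < h i := by
      have : (R:ℝ) < r + h i := by
        have h1 : (R:ℝ)/q - (h i:ℝ)/q < (r:ℝ)/q := hcond1
        have h2 : ((R:ℝ) - h i)/q < (r:ℝ)/q := by rw [sub_div]; exact h1
        have := (div_lt_div_iff_of_pos_right hqR).1 h2
        linarith
      have : R < r + h i := by exact_mod_cast this
      omega
    refine Finset.mem_biUnion.2 ⟨R - r, Finset.mem_range.2 hRrh, ?_⟩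
    rw [Nat.mem_divisors]
    have hle : H i ≤ x i + (R - r) := le_trans hHlt.le (Nat.le_add_right _ _)
    constructor
    · rw [← Nat.modEq_iff_dvd' hle]
      show H i % q = (x i + (R - r)) % q
      have hRlt : R < q := Nat.mod_lt _ hq0
      calc H i % q = R := rfl
        _ = (r + (R - r)) % q := by rw [Nat.add_sub_cancel' hrR]; exact (Nat.mod_eq_of_lt hRlt).symm
        _ = (x i % q + (R - r)) % q := rfl
        _ = (x i + (R - r)) % q := by rw [Nat.mod_add_mod]
    · omega
  have hcard1 : S.card ≤ ∑ a ∈ Finset.range (h i), (x i + a - H i).divisors.card :=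
    le_trans (Finset.card_le_card hsub) (Finset.card_biUnion_le)
  -- real bound
  have hbound : ∀ a ∈ Finset.range (h i),
      ((x i + a - H i).divisors.card : ℝ) ≤ C * (2:ℝ)^ε * (x i : ℝ)^ε := by
    intro a ha
    have hpos : 0 < x i + a - H i := by omega
    have h2x : ((x i + a - H i : ℕ) : ℝ) ≤ 2 * (x i : ℝ) := by
      have haH : a < h i := Finset.mem_range.1 ha
      have : x i + a - H i ≤ 2 * x i := by
        have := hhH i
        omega
      exact_mod_cast this
    calc ((x i + a - H i).divisors.card : ℝ) ≤ C * ((x i + a - H i : ℕ) : ℝ)^ε := hdiv _ hpos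
      _ ≤ C * (2 * (x i:ℝ))^ε := by
          apply mul_le_mul_of_nonneg_left _ hC.le
          exact Real.rpow_le_rpow (Nat.cast_nonneg _) (by exact_mod_cast h2x) hε.le
      _ = C * (2:ℝ)^ε * (x i:ℝ)^ε := by
          rw [Real.mul_rpow (by norm_num) (Nat.cast_nonneg _)]; ring
  have hRHS : (0:ℝ) ≤ (x i:ℝ)^ε * (h i:ℝ) := by positivity
  rw [Real.norm_eq_abs, Real.norm_eq_abs, abs_of_nonneg (Nat.cast_nonneg _), abs_of_nonneg hRHS]
  calc (S.card : ℝ) ≤ ∑ a ∈ Finset.range (h i), ((x i + a - H i).divisors.card : ℝ) := by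
        exact_mod_cast hcard1
    _ ≤ ∑ a ∈ Finset.range (h i), C * (2:ℝ)^ε * (x i : ℝ)^ε := Finset.sum_le_sum hbound
    _ = (h i : ℝ) * (C * (2:ℝ)^ε * (x i : ℝ)^ε) := by
        rw [Finset.sum_const, Finset.card_range, nsmul_eq_mul]
    _ = C * (2:ℝ)^ε * ((x i:ℝ)^ε * (h i:ℝ)) := by ring
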